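/- arXiv:2401.02185 — 3 statements merged into one kernel-verified Lean document; each statement's English description precedes it below -/
import Mathlib

section
/- Let Φ : POPI_n(Y) → POPI_n(Z) be a semigroup isomorphism and let φ : Y → Z be the induced bijection (characterized by id_{y}Φ = id_{yφ}). Then for every α ∈ POPI_n(Y): (a) if y ∈ Y ∩ Dom(α) then yφ ∈ Dom(αΦ) and (yφ)(αΦ) = (yα)φ; (b) Fix(αΦ) = Fix(α)φ; (c) Im(αΦ) = Im(α)φ. -/
open scoped Classical

namespace POPIpaper

/-- Partial transformations of `Ω_n = {1,…,n}`, modelled on `Fin n`. -/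
abbrev PT (n : ℕ) := Fin n → Option (Fin n)

/-- Composition of partial transformations (apply `α` first, then `β`). -/
def comp {n : ℕ} (α β : PT n) : PT n := fun x => (α x).bind β

/-- Domain of a partial transformation. -/
noncomputable def dom {n : ℕ} (α : PT n) : Finset (Fin n) :=
  Finset.univ.filter (fun x => (α x).isSome)

/-- Image of a partial transformation. -/
noncomputable def im {n : ℕ} (α : PT n) : Finset (Fin n) :=
  Finset.univ.filter (fun y => ∃ x, α x = some y)

/-- rank(α) = |Im(α)|. -/
noncomputable def rank {n : ℕ} (α : PT n) : ℕ := (im α).card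

/-- Injectivity of a partial transformation. -/
def Inj {n : ℕ} (α : PT n) : Prop :=
  ∀ x y z : Fin n, α x = some z → α y = some z → x = y

/-- Orientation-preserving: the sequence of images, taken along the increasing
enumeration of the domain, is cyclic, i.e. some rotation of it is sorted. -/
def OP {n : ℕ} (α : PT n) : Prop :=
  ∃ k : ℕ, (((List.finRange n).filterMap α).rotate k).Pairwise (· ≤ ·)

/-- The semigroup `POPI_n(Y)` as a set of partial transformations:
injective, orientation-preserving, with image contained in `Y`. -/
def POPI (n : ℕ) (Y : Finset (Fin n)) : Set (PT n) :=
  {α | Inj α ∧ OP α ∧ ∀ x y : Fin n, α x = some y → y ∈ Y}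

/-- Regularity of `α` as an element of the subsemigroup `S`. -/
def IsRegularIn {n : ℕ} (S : Set (PT n)) (α : PT n) : Prop :=
  ∃ β ∈ S, comp (comp α β) α = α

/-- The partial identity on a subset `A`. -/
def idp {n : ℕ} (A : Finset (Fin n)) : PT n :=
  fun x => if x ∈ A then some x else none

/-- Fixed points of a partial transformation. -/
noncomputable def fix {n : ℕ} (α : PT n) : Finset (Fin n) :=
  Finset.univ.filter (fun x => α x = some x)

/-- Green's relation ℒ on the set `S`: `S¹α = S¹β`. -/
def LRel {n : ℕ} (S : Set (PT n)) (α β : PT n) : Prop :=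
  (α = β ∨ ∃ γ ∈ S, comp γ β = α) ∧ (β = α ∨ ∃ γ ∈ S, comp γ α = β)

/-- Green's relation ℛ on the set `S`: `αS¹ = βS¹`. -/
def RRel {n : ℕ} (S : Set (PT n)) (α β : PT n) : Prop :=
  (α = β ∨ ∃ γ ∈ S, comp β γ = α) ∧ (β = α ∨ ∃ γ ∈ S, comp α γ = β)

/-- Green's relation ℋ = ℒ ∩ ℛ. -/
def HRel {n : ℕ} (S : Set (PT n)) (α β : PT n) : Prop :=
  LRel S α β ∧ RRel S α β

/-- Green's relation 𝒟 = ℒ ∘ ℛ. -/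
def DRel {n : ℕ} (S : Set (PT n)) (α β : PT n) : Prop :=
  ∃ γ ∈ S, LRel S α γ ∧ RRel S γ β

/-- `Φ` is a semigroup isomorphism from the subsemigroup `S` onto `T`. -/
def IsIso {n : ℕ} (S T : Set (PT n)) (Φ : PT n → PT n) : Prop :=
  Set.BijOn Φ S T ∧ ∀ a ∈ S, ∀ b ∈ S, Φ (comp a b) = comp (Φ a) (Φ b)

/-- The product `β * l₁ * ⋯ * l_k` of a nonempty list of partial transformations. -/
def prodList {n : ℕ} (β : PT n) (l : List (PT n)) : PT n := l.foldl comp β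

/-! ### Auxiliary lemmas -/

/-- The empty partial transformation. -/
def eps (n : ℕ) : PT n := fun _ => none

lemma eps_comp {n : ℕ} (β : PT n) : comp (eps n) β = eps n := rfl

lemma comp_eps {n : ℕ} (β : PT n) : comp β (eps n) = eps n := by
  funext x; cases h : β x <;> simp [comp, eps, h]

lemma sorted_of_all_eq {n : ℕ} {l : List (Fin n)}
    (h : ∀ a ∈ l, ∀ b ∈ l, a = b) : l.Pairwise (· ≤ ·) := by
  induction l with
  | nil => simp
  | cons a t ih =>
    rw [List.pairwise_cons]
    refine ⟨fun b hb => ?_, ih fun x hx y hy =>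
      h x (List.mem_cons_of_mem _ hx) y (List.mem_cons_of_mem _ hy)⟩
    rw [h a (List.mem_cons_self (a := a) (l := t)) b (List.mem_cons_of_mem _ hb)]

lemma op_of_sub {n : ℕ} {f : PT n}
    (h : ∀ x₁ x₂ w₁ w₂, f x₁ = some w₁ → f x₂ = some w₂ → w₁ = w₂) : OP f := by
  refine ⟨0, ?_⟩
  rw [List.rotate_zero]
  refine sorted_of_all_eq fun a ha b hb => ?_
  rw [List.mem_filterMap] at ha hb
  obtain ⟨x₁, -, h₁⟩ := ha
  obtain ⟨x₂, -, h₂⟩ := hb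
  exact h x₁ x₂ a b h₁ h₂

lemma eps_mem {n : ℕ} (Y : Finset (Fin n)) : eps n ∈ POPI n Y := by
  refine ⟨fun x y z hx => by simp [eps] at hx, ⟨0, ?_⟩, fun x y hx => by simp [eps] at hx⟩
  rw [List.rotate_zero]
  have he : (List.finRange n).filterMap (eps n) = [] := by
    rw [List.filterMap_eq_nil_iff]
    intro a _; rfl
  rw [he]
  exact List.Pairwise.nil

lemma idp_single_mem {n : ℕ} {Y : Finset (Fin n)} {y : Fin n} (hy : y ∈ Y) :
    idp {y} ∈ POPI n Y := by
  have happ : ∀ x w : Fin n, idp {y} x = some w → x = y ∧ w = y := by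
    intro x w hx
    simp only [idp, Finset.mem_singleton] at hx
    split at hx
    · simp_all
    · simp at hx
  refine ⟨fun x₁ x₂ z h₁ h₂ => ?_, op_of_sub fun x₁ x₂ w₁ w₂ h₁ h₂ => ?_,
    fun x w hx => ?_⟩
  · rw [(happ _ _ h₁).1, (happ _ _ h₂).1]
  · rw [(happ _ _ h₁).2, (happ _ _ h₂).2]
  · rw [(happ _ _ hx).2]; exact hy

lemma restrict_apply {n : ℕ} (α : PT n) (y x : Fin n) :
    comp (idp {y}) α x = if x = y then α y else none := by
  by_cases h : x = y
  · subst h; simp [comp, idp]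
  · simp [comp, idp, h]

lemma restrict_mem {n : ℕ} {Y : Finset (Fin n)} {α : PT n} (hα : α ∈ POPI n Y)
    (y : Fin n) : comp (idp {y}) α ∈ POPI n Y := by
  have happ : ∀ x w : Fin n, comp (idp {y}) α x = some w → x = y ∧ α y = some w := by
    intro x w hx
    rw [restrict_apply] at hx
    split at hx
    · simp_all
    · simp at hx
  refine ⟨fun x₁ x₂ z h₁ h₂ => ?_, op_of_sub fun x₁ x₂ w₁ w₂ h₁ h₂ => ?_,
    fun x w hx => ?_⟩
  · rw [(happ _ _ h₁).1, (happ _ _ h₂).1]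
  · have e₁ := (happ _ _ h₁).2
    have e₂ := (happ _ _ h₂).2
    rw [e₁] at e₂; exact Option.some_injective _ e₂
  · exact hα.2.2 y w (happ _ _ hx).2

lemma corestrict_apply {n : ℕ} (α : PT n) (z x w : Fin n) :
    comp α (idp {z}) x = some w ↔ α x = some w ∧ w = z := by
  cases h : α x with
  | none => simp [comp, h]
  | some v =>
    simp only [comp, h, Option.bind_some, idp, Finset.mem_singleton]
    by_cases hv : v = z
    · subst hv; simp
      exact fun h => h.symm
    · simp [hv]
      rintro rfl; exact hv

lemma corestrict_mem {n : ℕ} {Y : Finset (Fin n)} {α : PT n} (hα : α ∈ POPI n Y)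
    {z : Fin n} (hz : z ∈ Y) : comp α (idp {z}) ∈ POPI n Y := by
  refine ⟨fun x₁ x₂ w h₁ h₂ => ?_, op_of_sub fun x₁ x₂ w₁ w₂ h₁ h₂ => ?_,
    fun x w hx => ?_⟩
  · rw [corestrict_apply] at h₁ h₂
    exact hα.1 x₁ x₂ w h₁.1 h₂.1
  · rw [corestrict_apply] at h₁ h₂
    rw [h₁.2, h₂.2]
  · rw [corestrict_apply] at hx
    rw [hx.2]; exact hz

/-- properties of the bijection `φ` induced by an isomorphism
`Φ : POPI_n(Y) → POPI_n(Z)`. -/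
theorem iso_induced_properties {n : ℕ} (Y Z : Finset (Fin n))
    (hY : Y.Nonempty) (hZ : Z.Nonempty) (Φ : PT n → PT n)
    (hΦ : IsIso (POPI n Y) (POPI n Z) Φ) (φ : Fin n → Fin n)
    (hbij : Set.BijOn φ ↑Y ↑Z) (hid : ∀ y ∈ Y, Φ (idp {y}) = idp {φ y})
    (α : PT n) (hα : α ∈ POPI n Y) :
    (∀ y ∈ Y, ∀ z : Fin n, α y = some z → Φ α (φ y) = some (φ z)) ∧
    fix (Φ α) = (fix α).image φ ∧
    im (Φ α) = (im α).image φ := by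
  obtain ⟨hbijΦ, hhom⟩ := hΦ
  -- Φ sends the empty map to the empty map
  obtain ⟨δ₀, hδ₀S, hδ₀⟩ := hbijΦ.2.2 (eps_mem Z)
  have hΦε : Φ (eps n) = eps n := by
    have h := hhom (eps n) (eps_mem Y) δ₀ hδ₀S
    rw [eps_comp] at h
    rw [h, hδ₀, comp_eps]
  -- Part (a)
  have key : ∀ y ∈ Y, ∀ z : Fin n, α y = some z → Φ α (φ y) = some (φ z) := by
    intro y hy z hz
    have hzY : z ∈ Y := hα.2.2 y z hz
    set δ : PT n := comp (idp {y}) α with hδdef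
    have hδS : δ ∈ POPI n Y := restrict_mem hα y
    have hδy : δ y = some z := by rw [hδdef, restrict_apply]; simp [hz]
    have h1 : Φ δ = comp (idp {φ y}) (Φ α) := by
      rw [hδdef, hhom _ (idp_single_mem hy) _ hα, hid y hy]
    have hδ2 : δ = comp δ (idp {z}) := by
      funext x
      by_cases hx : x = y
      · subst hx
        rw [hδy]
        symm; rw [corestrict_apply]; exact ⟨hδy, rfl⟩
      · have : δ x = none := by rw [hδdef, restrict_apply]; simp [hx]
        rw [this]
        cases h : comp δ (idp {z}) x with
        | none => rfl
        | some w => rw [corestrict_apply] at h; rw [this] at h; simp at h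
    have h2 : Φ δ = comp (Φ δ) (idp {φ z}) := by
      conv_lhs => rw [hδ2]
      rw [hhom δ hδS _ (idp_single_mem hzY), hid z hzY]
    have hδne : δ ≠ eps n := by
      intro h; rw [h] at hδy; simp [eps] at hδy
    have hΦδne : Φ δ ≠ eps n := by
      intro h
      exact hδne (hbijΦ.2.1 hδS (eps_mem Y) (h.trans hΦε.symm))
    have h3 : ∀ x, x ≠ φ y → Φ δ x = none := by
      intro x hx
      rw [h1, restrict_apply]
      simp [hx]
    have h4 : Φ δ (φ y) ≠ none := by
      intro h
      apply hΦδne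
      funext x
      by_cases hx : x = φ y
      · rw [hx, h]; rfl
      · rw [h3 x hx]; rfl
    obtain ⟨w, hw⟩ := Option.ne_none_iff_exists'.mp h4
    have h5 : Φ α (φ y) = Φ δ (φ y) := by
      rw [h1, restrict_apply]; simp
    have h6 := congrFun h2 (φ y)
    rw [hw] at h6
    rw [eq_comm, corestrict_apply] at h6
    rw [h5, hw, h6.2]
  have hΦαT : Φ α ∈ POPI n Z := hbijΦ.1 hα
  refine ⟨key, ?_, ?_⟩
  -- Part (b)
  · ext w
    simp only [fix, Finset.mem_filter, Finset.mem_univ, true_and, Finset.mem_image]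
    constructor
    · intro hw
      have hwZ : w ∈ Z := hΦαT.2.2 w w hw
      obtain ⟨y, hyY, hyw⟩ := hbij.2.2 hwZ
      refine ⟨y, ?_, hyw⟩
      set δ : PT n := comp (idp {y}) α with hδdef
      have hδS : δ ∈ POPI n Y := restrict_mem hα y
      have h1 : Φ δ = comp (idp {φ y}) (Φ α) := by
        rw [hδdef, hhom _ (idp_single_mem hyY) _ hα, hid y hyY]
      have h2 : Φ δ = idp {φ y} := by
        rw [h1]
        funext x
        by_cases hx : x = φ y
        · subst hx
          rw [restrict_apply, if_pos rfl]
          simp [idp, hyw, hw]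
        · rw [restrict_apply]
          simp [idp, hx]
      have h3 : δ = idp {y} := hbijΦ.2.1 hδS (idp_single_mem hyY)
        (by rw [h2, hid y hyY])
      have h4 := congrFun h3 y
      rw [hδdef, restrict_apply, if_pos rfl] at h4
      rw [h4]
      simp [idp]
    · rintro ⟨y, hy, rfl⟩
      have hyY : y ∈ Y := hα.2.2 y y hy
      exact key y hyY y hy
  -- Part (c)
  · ext w
    simp only [im, Finset.mem_filter, Finset.mem_univ, true_and, Finset.mem_image]
    constructor
    · rintro ⟨u, hu⟩
      have hwZ : w ∈ Z := hΦαT.2.2 u w hu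
      obtain ⟨z, hzY, hzw⟩ := hbij.2.2 hwZ
      set δ : PT n := comp α (idp {z}) with hδdef
      have hδS : δ ∈ POPI n Y := corestrict_mem hα hzY
      have h1 : Φ δ = comp (Φ α) (idp {φ z}) := by
        rw [hδdef, hhom _ hα _ (idp_single_mem hzY), hid z hzY]
      have h2 : Φ δ u = some w := by
        rw [h1]
        rw [show comp (Φ α) (idp {φ z}) u = some w ↔ _ from corestrict_apply _ _ _ _]
        exact ⟨hu, hzw.symm⟩
      have hδne : δ ≠ eps n := by
        intro h
        rw [h, hΦε] at h2
        simp [eps] at h2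
      have : ∃ x, δ x ≠ none := by
        by_contra hc
        push_neg at hc
        exact hδne (funext fun x => hc x)
      obtain ⟨x, hx⟩ := this
      obtain ⟨v, hv⟩ := Option.ne_none_iff_exists'.mp hx
      rw [hδdef, corestrict_apply] at hv
      exact ⟨z, ⟨x, hv.2 ▸ hv.1⟩, hzw⟩
    · rintro ⟨z, ⟨x, hxz⟩, rfl⟩
      have hzY : z ∈ Y := hα.2.2 x z hxz
      set δ : PT n := comp α (idp {z}) with hδdef
      have hδS : δ ∈ POPI n Y := corestrict_mem hα hzY
      have h1 : Φ δ = comp (Φ α) (idp {φ z}) := by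
        rw [hδdef, hhom _ hα _ (idp_single_mem hzY), hid z hzY]
      have hδx : δ x = some z := by
        rw [hδdef, corestrict_apply]; exact ⟨hxz, rfl⟩
      have hδne : δ ≠ eps n := by
        intro h; rw [h] at hδx; simp [eps] at hδx
      have hΦδne : Φ δ ≠ eps n := by
        intro h
        exact hδne (hbijΦ.2.1 hδS (eps_mem Y) (h.trans hΦε.symm))
      have : ∃ u, Φ δ u ≠ none := by
        by_contra hc
        push_neg at hc
        exact hΦδne (funext fun u => hc u)
      obtain ⟨u, hu⟩ := this
      obtain ⟨v, hv⟩ := Option.ne_none_iff_exists'.mp hu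
      rw [h1, corestrict_apply] at hv
      exact ⟨u, hv.2 ▸ hv.1⟩

end POPIpaper
end

section
/- An injective partial transformation α of Ω_n = {1,...,n} is a restriction of a permutation in the dihedral group D_{2n} = ⟨g, h⟩ (where g is the n-cycle i ↦ i+1 mod n and h is the reversal i ↦ n+1−i) if and only if for all i, j ∈ Dom(α) with i < j, one has |jα − iα| ∈ {j − i, n − (j − i)}. -/
open scoped Classical

namespace POPIpaper

/-- The dihedral group `D_{2n}`, as the subgroup of the symmetric group on `Fin n`
generated by the `n`-cycle `i ↦ i+1 (mod n)` and the reversal `i ↦ n+1-i`. -/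
def D2 (n : ℕ) : Subgroup (Equiv.Perm (Fin n)) :=
  Subgroup.closure {finRotate n, Fin.revPerm}


section Helpers

variable {n : ℕ}

lemma toZ_inj [NeZero n] {a b : Fin n} (h : ((a : ℕ) : ZMod n) = ((b : ℕ) : ZMod n)) :
    a = b := by
  have ha := ZMod.val_cast_of_lt a.isLt
  have hb := ZMod.val_cast_of_lt b.isLt
  exact Fin.ext (by rw [← ha, ← hb, h])

lemma toZ_finRotate (hn : 0 < n) (x : Fin n) :
    (((finRotate n) x : ℕ) : ZMod n) = ((x : ℕ) : ZMod n) + 1 := by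
  obtain ⟨m, rfl⟩ := Nat.exists_eq_succ_of_ne_zero hn.ne'
  rw [finRotate_succ_apply]
  have h : ((x + 1 : Fin (m + 1)) : ℕ) = ((x : ℕ) + 1) % (m + 1) := by
    simp [Fin.add_def]
  rw [h, ZMod.natCast_mod]
  push_cast
  ring

lemma toZ_rev (x : Fin n) :
    ((Fin.revPerm x : ℕ) : ZMod n) = -((x : ℕ) : ZMod n) - 1 := by
  have hx : (Fin.rev x : ℕ) + ((x : ℕ) + 1) = n := by
    have := x.isLt
    simp only [Fin.val_rev]
    omega
  have h2 : ((Fin.rev x : ℕ) : ZMod n) + (((x : ℕ) : ZMod n) + 1) = 0 := by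
    have := congrArg (Nat.cast : ℕ → ZMod n) hx
    push_cast at this
    rw [this]
    exact ZMod.natCast_self n
  have h3 : Fin.revPerm x = Fin.rev x := rfl
  rw [h3]
  linear_combination h2

lemma toZ_rot_pow (hn : 0 < n) (k : ℕ) (x : Fin n) :
    ((((finRotate n) ^ k) x : ℕ) : ZMod n) = ((x : ℕ) : ZMod n) + k := by
  induction k with
  | zero => simp
  | succ k ih =>
      rw [pow_succ', Equiv.Perm.mul_apply, toZ_finRotate hn, ih]
      push_cast
      ring

lemma D2_form (hn : 0 < n) {δ : Equiv.Perm (Fin n)} (hδ : δ ∈ D2 n) :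
    ∃ ε c : ZMod n, (ε = 1 ∨ ε = -1) ∧
      ∀ x : Fin n, ((δ x : ℕ) : ZMod n) = ε * ((x : ℕ) : ZMod n) + c := by
  induction hδ using Subgroup.closure_induction with
  | mem g hg =>
      rcases hg with hg | hg
      · subst hg
        exact ⟨1, 1, Or.inl rfl, fun x => by rw [toZ_finRotate hn x]; ring⟩
      · rw [Set.mem_singleton_iff] at hg
        subst hg
        exact ⟨-1, -1, Or.inr rfl, fun x => by rw [toZ_rev x]; ring⟩
  | one => exact ⟨1, 0, Or.inl rfl, fun x => by simp⟩
  | mul x y hx hy ihx ihy =>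
      obtain ⟨ε1, c1, hε1, h1⟩ := ihx
      obtain ⟨ε2, c2, hε2, h2⟩ := ihy
      refine ⟨ε1 * ε2, ε1 * c2 + c1, ?_, fun t => ?_⟩
      · rcases hε1 with rfl | rfl <;> rcases hε2 with rfl | rfl <;> norm_num
      · rw [Equiv.Perm.mul_apply, h1, h2]; ring
  | inv x hx ihx =>
      obtain ⟨ε, c, hε, hf⟩ := ihx
      have hεε : ε * ε = 1 := by rcases hε with rfl | rfl <;> norm_num
      refine ⟨ε, -(ε * c), hε, fun y => ?_⟩
      have h' := hf (x⁻¹ y)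
      rw [show x (x⁻¹ y) = y from x.apply_symm_apply y] at h'
      linear_combination (-ε) * h' - (((x⁻¹ y : Fin n) : ℕ) : ZMod n) * hεε

lemma trans_mem (hn : 0 < n) (c : ZMod n) :
    ∃ δ ∈ D2 n, ∀ x : Fin n, ((δ x : ℕ) : ZMod n) = ((x : ℕ) : ZMod n) + c := by
  haveI : NeZero n := ⟨hn.ne'⟩
  have hrot : finRotate n ∈ D2 n := Subgroup.subset_closure (Set.mem_insert _ _)
  refine ⟨finRotate n ^ c.val, Subgroup.pow_mem _ hrot _, fun x => ?_⟩
  rw [toZ_rot_pow hn, ZMod.natCast_val, ZMod.cast_id]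

lemma refl_mem (hn : 0 < n) (c : ZMod n) :
    ∃ δ ∈ D2 n, ∀ x : Fin n, ((δ x : ℕ) : ZMod n) = -((x : ℕ) : ZMod n) + c := by
  haveI : NeZero n := ⟨hn.ne'⟩
  have hrot : finRotate n ∈ D2 n := Subgroup.subset_closure (Set.mem_insert _ _)
  have hrev : Fin.revPerm ∈ D2 n := Subgroup.subset_closure (Set.mem_insert_of_mem _ rfl)
  refine ⟨finRotate n ^ (c + 1).val * Fin.revPerm,
    Subgroup.mul_mem _ (Subgroup.pow_mem _ hrot _) hrev, fun x => ?_⟩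
  rw [Equiv.Perm.mul_apply, toZ_rot_pow hn, toZ_rev, ZMod.natCast_val, ZMod.cast_id]
  ring

end Helpers

/-- an injective partial transformation is a restriction of a
permutation in `D_{2n}` iff `|jα - iα| ∈ {j-i, n-(j-i)}` for all `i < j` in its domain. -/
theorem restriction_of_dihedral_iff {n : ℕ} (hn : 3 ≤ n) (α : PT n) (hinj : Inj α) :
    (∃ δ ∈ D2 n, ∀ x z : Fin n, α x = some z → δ x = z) ↔
      (∀ i j zi zj : Fin n, α i = some zi → α j = some zj → i < j →
        (|(zj : ℤ) - (zi : ℤ)| = (j : ℤ) - (i : ℤ) ∨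
         |(zj : ℤ) - (zi : ℤ)| = (n : ℤ) - ((j : ℤ) - (i : ℤ)))) := by
  haveI : NeZero n := ⟨by omega⟩
  constructor
  · rintro ⟨δ, hδ, hres⟩ i j zi zj hi hj hij
    obtain ⟨ε, c, hε, hform⟩ := D2_form (by omega : 0 < n) hδ
    have h1 : ((zi : ℕ) : ZMod n) = ε * ((i : ℕ) : ZMod n) + c := by
      rw [← hres i zi hi]; exact hform i
    have h2 : ((zj : ℕ) : ZMod n) = ε * ((j : ℕ) : ZMod n) + c := by
      rw [← hres j zj hj]; exact hform j
    have B1 : ((zi : ℕ) : ℤ) < n := by exact_mod_cast zi.isLt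
    have B2 : ((zj : ℕ) : ℤ) < n := by exact_mod_cast zj.isLt
    have B3 : ((i : ℕ) : ℤ) < n := by exact_mod_cast i.isLt
    have B4 : ((j : ℕ) : ℤ) < n := by exact_mod_cast j.isLt
    have B5 : (0 : ℤ) ≤ ((zi : ℕ) : ℤ) := Int.natCast_nonneg _
    have B6 : (0 : ℤ) ≤ ((zj : ℕ) : ℤ) := Int.natCast_nonneg _
    have B7 : ((i : ℕ) : ℤ) < ((j : ℕ) : ℤ) := by exact_mod_cast hij
    have B8 : (0 : ℤ) ≤ ((i : ℕ) : ℤ) := Int.natCast_nonneg _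
    have hnpos : (0 : ℤ) < (n : ℤ) := by exact_mod_cast (by omega : 0 < n)
    rcases hε with rfl | rfl
    · have keyc : (((((zj : ℕ) : ℤ) - ((zi : ℕ) : ℤ) - (((j : ℕ) : ℤ) - ((i : ℕ) : ℤ))) : ℤ)
          : ZMod n) = 0 := by
        push_cast
        linear_combination h2 - h1
      obtain ⟨k, hk⟩ := (ZMod.intCast_zmod_eq_zero_iff_dvd _ n).mp keyc
      have hklt : k < 1 := by
        by_contra hc
        push_neg at hc
        have : (n : ℤ) * 1 ≤ (n : ℤ) * k := mul_le_mul_of_nonneg_left hc hnpos.le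
        linarith
      have hkgt : -2 < k := by
        by_contra hc
        push_neg at hc
        have : (n : ℤ) * k ≤ (n : ℤ) * (-2) := mul_le_mul_of_nonneg_left hc hnpos.le
        linarith
      have hk0 : k = 0 ∨ k = -1 := by omega
      rcases hk0 with rfl | rfl
      · left
        rw [abs_eq (by linarith : (0 : ℤ) ≤ ((j : ℕ) : ℤ) - ((i : ℕ) : ℤ))]
        left
        linarith
      · right
        rw [abs_eq (by linarith : (0 : ℤ) ≤ (n : ℤ) - (((j : ℕ) : ℤ) - ((i : ℕ) : ℤ)))]
        right
        linarith
    · have keyc : (((((zj : ℕ) : ℤ) - ((zi : ℕ) : ℤ) + (((j : ℕ) : ℤ) - ((i : ℕ) : ℤ))) : ℤ)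
          : ZMod n) = 0 := by
        push_cast
        linear_combination h2 - h1
      obtain ⟨k, hk⟩ := (ZMod.intCast_zmod_eq_zero_iff_dvd _ n).mp keyc
      have hklt : k < 2 := by
        by_contra hc
        push_neg at hc
        have : (n : ℤ) * 2 ≤ (n : ℤ) * k := mul_le_mul_of_nonneg_left hc hnpos.le
        linarith
      have hkgt : -1 < k := by
        by_contra hc
        push_neg at hc
        have : (n : ℤ) * k ≤ (n : ℤ) * (-1) := mul_le_mul_of_nonneg_left hc hnpos.le
        linarith
      have hk0 : k = 0 ∨ k = 1 := by omega
      rcases hk0 with rfl | rfl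
      · left
        rw [abs_eq (by linarith : (0 : ℤ) ≤ ((j : ℕ) : ℤ) - ((i : ℕ) : ℤ))]
        right
        linarith
      · right
        rw [abs_eq (by linarith : (0 : ℤ) ≤ (n : ℤ) - (((j : ℕ) : ℤ) - ((i : ℕ) : ℤ)))]
        left
        linarith
  · intro h
    have key : ∀ i j zi zj : Fin n, α i = some zi → α j = some zj → i < j →
        ((zj : ℕ) : ZMod n) - ((zi : ℕ) : ZMod n) = ((j : ℕ) : ZMod n) - ((i : ℕ) : ZMod n) ∨
        ((zj : ℕ) : ZMod n) - ((zi : ℕ) : ZMod n)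
          = -(((j : ℕ) : ZMod n) - ((i : ℕ) : ZMod n)) := by
      intro i j zi zj hi hj hlt
      rcases h i j zi zj hi hj hlt with hab | hab
      · rcases (abs_eq (hab ▸ abs_nonneg _)).mp hab with ht | ht
        · left
          have h2 := congrArg (fun t : ℤ => (t : ZMod n)) ht
          push_cast at h2
          linear_combination h2
        · right
          have h2 := congrArg (fun t : ℤ => (t : ZMod n)) ht
          push_cast at h2
          linear_combination h2
      · rcases (abs_eq (hab ▸ abs_nonneg _)).mp hab with ht | ht
        · right
          have h2 := congrArg (fun t : ℤ => (t : ZMod n)) ht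
          push_cast at h2
          simp only [ZMod.natCast_self] at h2
          linear_combination h2
        · left
          have h2 := congrArg (fun t : ℤ => (t : ZMod n)) ht
          push_cast at h2
          simp only [ZMod.natCast_self] at h2
          linear_combination h2
    have pairZ : ∀ i j zi zj : Fin n, α i = some zi → α j = some zj →
        ((zj : ℕ) : ZMod n) - ((zi : ℕ) : ZMod n) = ((j : ℕ) : ZMod n) - ((i : ℕ) : ZMod n) ∨
        ((zj : ℕ) : ZMod n) - ((zi : ℕ) : ZMod n)
          = -(((j : ℕ) : ZMod n) - ((i : ℕ) : ZMod n)) := by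
      intro i j zi zj hi hj
      rcases lt_trichotomy i j with hlt | heq | hlt
      · exact key i j zi zj hi hj hlt
      · subst heq
        rw [hi] at hj
        injection hj with hz
        subst hz
        left; ring
      · rcases key j i zj zi hj hi hlt with ht | ht
        · left; linear_combination -ht
        · right; linear_combination -ht
    by_cases hdom : ∃ i zi, α i = some zi
    · obtain ⟨i₀, zi₀, h₀⟩ := hdom
      have main : (∀ x zx, α x = some zx →
            ((zx : ℕ) : ZMod n)
              = ((x : ℕ) : ZMod n) + (((zi₀ : ℕ) : ZMod n) - ((i₀ : ℕ) : ZMod n))) ∨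
          (∀ x zx, α x = some zx →
            ((zx : ℕ) : ZMod n)
              = -((x : ℕ) : ZMod n) + (((zi₀ : ℕ) : ZMod n) + ((i₀ : ℕ) : ZMod n))) := by
        by_contra hcon
        push_neg at hcon
        obtain ⟨⟨a, za, ha, ha'⟩, b, zb, hb, hb'⟩ := hcon
        have hA : ((za : ℕ) : ZMod n)
            = -((a : ℕ) : ZMod n) + (((zi₀ : ℕ) : ZMod n) + ((i₀ : ℕ) : ZMod n)) := by
          rcases pairZ i₀ a zi₀ za h₀ ha with ht | ht
          · exact absurd (by linear_combination ht) ha'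
          · linear_combination ht
        have hB : ((zb : ℕ) : ZMod n)
            = ((b : ℕ) : ZMod n) + (((zi₀ : ℕ) : ZMod n) - ((i₀ : ℕ) : ZMod n)) := by
          rcases pairZ i₀ b zi₀ zb h₀ hb with ht | ht
          · linear_combination ht
          · exact absurd (by linear_combination ht) hb'
        rcases pairZ a b za zb ha hb with ht | ht
        · exact ha' (by linear_combination hB - ht)
        · exact hb' (by linear_combination hA + ht)
      rcases main with hm | hm
      · obtain ⟨δ, hδ, hf⟩ := trans_mem (by omega : 0 < n)
          (((zi₀ : ℕ) : ZMod n) - ((i₀ : ℕ) : ZMod n))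
        exact ⟨δ, hδ, fun x z hx => toZ_inj (by rw [hf x, hm x z hx])⟩
      · obtain ⟨δ, hδ, hf⟩ := refl_mem (by omega : 0 < n)
          (((zi₀ : ℕ) : ZMod n) + ((i₀ : ℕ) : ZMod n))
        exact ⟨δ, hδ, fun x z hx => toZ_inj (by rw [hf x, hm x z hx])⟩
    · push_neg at hdom
      exact ⟨1, Subgroup.one_mem _, fun x z hx => absurd hx (hdom x z)⟩


end POPIpaper
end

section
/- Let Y = {y_1 < y_2 < ... < y_r} ⊆ Ω_n and let ḡ ∈ POPI_n(Y) be the r-cycle sending y_i to y_{i+1} (indices mod r) with domain Y. If α, β ∈ POPI_n(Y) both have rank r and Dom(α) = Dom(β), then α = β·ḡ^t for some 0 ≤ t ≤ r − 1. -/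
open scoped Classical

namespace POPIpaper

/-- Powers of a partial transformation, with `pow1 γ 0` the identity. -/
def pow1 {n : ℕ} (γ : PT n) : ℕ → PT n
  | 0 => fun x => some x
  | k + 1 => comp (pow1 γ k) γ

private lemma filterMap_eq_map_filter {n : ℕ} (γ : PT n) (d0 : Fin n) (l : List (Fin n)) :
    l.filterMap γ = (l.filter (fun x => (γ x).isSome)).map (fun x => (γ x).getD d0) := by
  induction l with
  | nil => simp
  | cons a l ih => cases h : γ a <;> simp [List.filterMap_cons, List.filter_cons, h, ih]

private lemma getElem_idx_congr {α : Type*} (l : List α) {i j : ℕ} (h : i = j)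
    (hj : j < l.length) : l[i]'(h ▸ hj) = l[j]'hj := by subst h; rfl

private lemma key {n r : ℕ} {Y : Finset (Fin n)} (hY : Y.card = r) (hr : 0 < r)
    {γ : PT n} (hγ : γ ∈ POPI n Y) (hrγ : rank γ = r) :
    ∃ hD : (dom γ).card = r, ∃ c < r, ∀ (j : ℕ) (hj : j < r),
      γ ((dom γ).orderEmbOfFin hD ⟨j, hj⟩)
        = some (Y.orderEmbOfFin hY ⟨(j + c) % r, Nat.mod_lt _ hr⟩) := by
  obtain ⟨hinj, ⟨k, hk⟩, him⟩ := hγ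
  obtain ⟨d0, hd0⟩ : Y.Nonempty := Finset.card_pos.mp (by omega)
  set L := (List.finRange n).filterMap γ with hL
  set F := (List.finRange n).filter (fun x => (γ x).isSome) with hF
  set g : Fin n → Fin n := fun x => (γ x).getD d0 with hgdef
  have hLg : L = F.map g := filterMap_eq_map_filter γ d0 _
  have him' : im γ = Y := by
    apply Finset.eq_of_subset_of_card_le
    · intro y hy
      simp only [im, Finset.mem_filter, Finset.mem_univ, true_and] at hy
      obtain ⟨x, hx⟩ := hy
      exact him x y hx
    · rw [hY]; exact le_of_eq hrγ.symm
  have hmemL : ∀ y, y ∈ L ↔ y ∈ Y := by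
    intro y
    simp only [hL, List.mem_filterMap, List.mem_finRange, true_and]
    constructor
    · rintro ⟨x, hx⟩; exact him x y hx
    · intro hy
      rw [← him'] at hy
      simp only [im, Finset.mem_filter, Finset.mem_univ, true_and] at hy
      exact hy
  have hnodL : L.Nodup :=
    List.Nodup.filterMap (fun a a' b hb hb' => hinj a a' b hb hb') (List.nodup_finRange n)
  have hperm : (L.rotate k).Perm (Finset.sort Y (· ≤ ·)) := by
    rw [List.perm_ext_iff_of_nodup ((List.rotate_perm L k).nodup_iff.mpr hnodL)
        (Finset.sort_nodup _ _)]
    intro a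
    rw [List.mem_rotate, Finset.mem_sort, hmemL]
  have heq : L.rotate k = Finset.sort Y (· ≤ ·) :=
    List.Perm.eq_of_pairwise' hk (Finset.pairwise_sort _ _) hperm
  have hslen : (Finset.sort Y (· ≤ ·)).length = r := by rw [Finset.length_sort, hY]
  have hlen : L.length = r := by
    have := congrArg List.length heq
    rwa [List.length_rotate, hslen] at this
  have hFlen : F.length = r := by
    have h := congrArg List.length hLg
    rw [List.length_map] at h
    omega
  have hFs : F = Finset.sort (dom γ) (· ≤ ·) := by
    refine (fun hp hs => List.Perm.eq_of_pairwise' hs (Finset.pairwise_sort _ _) hp) ?_ ?_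
    · rw [List.perm_ext_iff_of_nodup ((List.nodup_finRange n).filter _) (Finset.sort_nodup _ _)]
      intro a
      simp [hF, dom, List.mem_filter]
    · exact List.Pairwise.filter _ (List.pairwise_le_finRange n)
  have hD : (dom γ).card = r := by
    rw [← Finset.length_sort (r := (· ≤ ·)), ← hFs, hFlen]
  refine ⟨hD, (r - k % r) % r, Nat.mod_lt _ hr, ?_⟩
  have hck : ((r - k % r) % r + k) % r = 0 := by
    rw [Nat.mod_add_mod]
    have hklt : k % r < r := Nat.mod_lt _ hr
    have hdm := Nat.div_add_mod k r
    have h5 : r - k % r + k = r * (k / r) + r := by omega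
    rw [h5, Nat.mul_add_mod, Nat.mod_self]
  have main : ∀ (i : ℕ) (hi : i < r),
      γ ((dom γ).orderEmbOfFin hD ⟨(i + k) % r, Nat.mod_lt _ hr⟩)
        = some (Y.orderEmbOfFin hY ⟨i, hi⟩) := by
    intro i hi
    have hm : (i + k) % r < r := Nat.mod_lt _ hr
    have hmL : (i + k) % r < L.length := by omega
    have hmF : (i + k) % r < F.length := by omega
    have h1 : Y.orderEmbOfFin hY ⟨i, hi⟩ = L[(i + k) % r]'hmL := by
      rw [Finset.orderEmbOfFin_apply]
      have e1 : (Finset.sort Y (· ≤ ·))[i]'(by omega) = (L.rotate k)[i]'(by rw [List.length_rotate]; omega) :=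
        List.getElem_of_eq heq.symm (by omega)
      have e2 : (L.rotate k)[i]'(by rw [List.length_rotate]; omega) = L[(i + k) % L.length]'(Nat.mod_lt _ (by omega)) :=
        List.getElem_rotate L k i (by rw [List.length_rotate]; omega)
      have e3 : L[(i + k) % L.length]'(Nat.mod_lt _ (by omega)) = L[(i + k) % r]'hmL :=
        getElem_idx_congr L (by rw [hlen]) hmL
      exact (e1.trans e2).trans e3
    have h2 : L[(i + k) % r]'hmL = g (F[(i + k) % r]'hmF) := by
      simp only [hLg, List.getElem_map]
    have h3 : F[(i + k) % r]'hmF = (dom γ).orderEmbOfFin hD ⟨(i + k) % r, hm⟩ := by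
      rw [Finset.orderEmbOfFin_apply]
      exact List.getElem_of_eq hFs _
    have hdomsome : ∀ x ∈ dom γ, (γ x).isSome := by
      intro x hx; simpa [dom] using hx
    have hdin := hdomsome _ (Finset.orderEmbOfFin_mem (dom γ) hD ⟨(i + k) % r, hm⟩)
    obtain ⟨v, hv⟩ := Option.isSome_iff_exists.mp hdin
    have hvval : v = Y.orderEmbOfFin hY ⟨i, hi⟩ := by
      rw [h1, h2, h3]
      simp [hgdef, hv]
    rw [hv, hvval]
  intro j hj
  set i := (j + (r - k % r) % r) % r with hi_def
  have hi : i < r := Nat.mod_lt _ hr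
  have h4 : (i + k) % r = j := by
    rw [hi_def, Nat.mod_add_mod, Nat.add_assoc, Nat.add_mod, hck,
      Nat.add_zero, Nat.mod_mod_of_dvd, Nat.mod_eq_of_lt hj]
    exact dvd_refl r
  have hmain := main i hi
  have hfin : (⟨(i + k) % r, Nat.mod_lt _ hr⟩ : Fin r) = ⟨j, hj⟩ := Fin.ext h4
  rw [hfin] at hmain
  exact hmain


private lemma pow1_apply {n r : ℕ} {Y : Finset (Fin n)} (hY : Y.card = r) (hr : 0 < r)
    (gbar : PT n)
    (hg : ∀ (i : ℕ) (hi : i < r), gbar (Y.orderEmbOfFin hY ⟨i, hi⟩) =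
        some (Y.orderEmbOfFin hY ⟨(i + 1) % r, Nat.mod_lt _ hr⟩)) :
    ∀ (t i : ℕ) (hi : i < r), pow1 gbar t (Y.orderEmbOfFin hY ⟨i, hi⟩)
        = some (Y.orderEmbOfFin hY ⟨(i + t) % r, Nat.mod_lt _ hr⟩) := by
  intro t
  induction t with
  | zero =>
    intro i hi
    have e : (⟨i, hi⟩ : Fin r) = ⟨(i + 0) % r, Nat.mod_lt _ hr⟩ :=
      Fin.ext (by simp [Nat.mod_eq_of_lt hi])
    show some (Y.orderEmbOfFin hY ⟨i, hi⟩) = _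
    rw [e]
  | succ t ih =>
    intro i hi
    show ((pow1 gbar t) (Y.orderEmbOfFin hY ⟨i, hi⟩)).bind gbar = _
    rw [ih i hi]
    simp only [Option.bind_some]
    rw [hg ((i + t) % r) (Nat.mod_lt _ hr)]
    have e : (⟨((i + t) % r + 1) % r, Nat.mod_lt _ hr⟩ : Fin r)
        = ⟨(i + (t + 1)) % r, Nat.mod_lt _ hr⟩ :=
      Fin.ext (by show ((i + t) % r + 1) % r = _; rw [Nat.mod_add_mod, Nat.add_assoc])
    rw [e]

/-- if `α, β ∈ POPI_n(Y)` have rank `r = |Y|` and the same domain,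
then `α = β·ḡᵗ` for some `0 ≤ t ≤ r-1`, where `ḡ` is the `r`-cycle on `Y`. -/
theorem eq_comp_pow_gbar {n r : ℕ} (Y : Finset (Fin n)) (hY : Y.card = r)
    (hr : 0 < r) (gbar : PT n) (hgdom : dom gbar = Y)
    (hg : ∀ (i : ℕ) (hi : i < r),
      gbar ((Y.orderIsoOfFin hY ⟨i, hi⟩ : Y) : Fin n) =
        some ((Y.orderIsoOfFin hY ⟨(i + 1) % r, Nat.mod_lt _ hr⟩ : Y) : Fin n))
    (α β : PT n) (hα : α ∈ POPI n Y) (hβ : β ∈ POPI n Y)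
    (hrα : rank α = r) (hrβ : rank β = r) (hdom : dom α = dom β) :
    ∃ t < r, α = comp β (pow1 gbar t) := by
  have hg' : ∀ (i : ℕ) (hi : i < r), gbar (Y.orderEmbOfFin hY ⟨i, hi⟩) =
      some (Y.orderEmbOfFin hY ⟨(i + 1) % r, Nat.mod_lt _ hr⟩) := by
    intro i hi
    have h := hg i hi
    rwa [Finset.coe_orderIsoOfFin_apply, Finset.coe_orderIsoOfFin_apply] at h
  obtain ⟨hDα, cα, hcα, hmα⟩ := key hY hr hα hrα
  obtain ⟨hDβ, cβ, hcβ, hmβ⟩ := key hY hr hβ hrβ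
  have hembeq : ∀ (j : Fin r), (dom β).orderEmbOfFin hDβ j = (dom α).orderEmbOfFin hDα j := by
    intro j
    rw [Finset.orderEmbOfFin_apply, Finset.orderEmbOfFin_apply]
    exact List.getElem_of_eq (by rw [hdom]) _
  set t := (cα + r - cβ) % r with ht_def
  refine ⟨t, Nat.mod_lt _ hr, ?_⟩
  funext x
  by_cases hx : x ∈ dom α
  · obtain ⟨j, hjx⟩ : ∃ j : Fin r, (dom α).orderEmbOfFin hDα j = x :=
      ⟨((dom α).orderIsoOfFin hDα).symm ⟨x, hx⟩, by
        rw [← Finset.coe_orderIsoOfFin_apply, OrderIso.apply_symm_apply]⟩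
    obtain ⟨j, hj⟩ := j
    rw [← hjx]
    have hβx : β ((dom α).orderEmbOfFin hDα ⟨j, hj⟩)
        = some (Y.orderEmbOfFin hY ⟨(j + cβ) % r, Nat.mod_lt _ hr⟩) := by
      rw [← hembeq ⟨j, hj⟩]; exact hmβ j hj
    show α _ = (β ((dom α).orderEmbOfFin hDα ⟨j, hj⟩)).bind (pow1 gbar t)
    rw [hmα j hj, hβx]
    simp only [Option.bind_some]
    rw [pow1_apply hY hr gbar hg' t ((j + cβ) % r) (Nat.mod_lt _ hr)]
    congr 2
    refine (Fin.ext ?_).symm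
    show ((j + cβ) % r + t) % r = (j + cα) % r
    rw [Nat.mod_add_mod, Nat.add_comm (j + cβ) t, ht_def, Nat.mod_add_mod]
    have e : cα + r - cβ + (j + cβ) = j + cα + r := by omega
    rw [e, Nat.add_mod_right]
  · have hax : α x = none := by
      rw [← Option.not_isSome_iff_eq_none]
      simpa [dom] using hx
    have hbx : β x = none := by
      rw [← Option.not_isSome_iff_eq_none]
      rw [hdom] at hx
      simpa [dom] using hx
    show α x = (β x).bind (pow1 gbar t)
    rw [hax, hbx]
    rfl

end POPIpaper
end
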